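/- Let λ ∈ ℂ* and a, b', b'₀ ∈ ℂ. Let W and W₀ be the Verma 𝔚-modules with highest weight vectors w and w₀ of highest weights b' and b'₀ respectively. Then the linear map φ : L(W, λ, a, b'₀ + 1) → L(W₀, λ⁻¹, a, b' + 1) defined by φ((d_{−1}^k w) ⊗ t^l) = λ^{−l} ((a + l − d_{−1})^k w₀) ⊗ t^l, for k ∈ ℤ≥0 and l ∈ ℤ, is an isomorphism of Virasoro modules. -/

import Mathlib

/-- A representation of the Witt algebra `𝔚 = span{d_i : i ≥ -1}`, encoded by the family of
operators `d i` (only the indices `i ≥ -1` are relevant) satisfying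
`[d_m, d_n] = (n - m) d_{m+n}`. -/
structure WittRep (W : Type*) [AddCommGroup W] [Module ℂ W] where
  d : ℤ → W →ₗ[ℂ] W
  comm : ∀ m n : ℤ, -1 ≤ m → -1 ≤ n →
    d m ∘ₗ d n - d n ∘ₗ d m = (((n - m : ℤ) : ℂ)) • d (m + n)

namespace WittRep

variable {W : Type*} [AddCommGroup W] [Module ℂ W]

/-- Condition A : the module lies in the category `O_𝔚`. -/
def InO (ρ : WittRep W) : Prop :=
  ∀ v : W, ∃ n : ℕ, ∀ i : ℤ, (n : ℤ) ≤ i → ρ.d i v = 0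

/-- The module is trivial: the Lie algebra acts by zero. -/
def IsTrivial (ρ : WittRep W) : Prop := ∀ i : ℤ, -1 ≤ i → ρ.d i = 0

/-- A `𝔚`-submodule. -/
def Invariant (ρ : WittRep W) (U : Submodule ℂ W) : Prop :=
  ∀ i : ℤ, -1 ≤ i → ∀ u ∈ U, ρ.d i u ∈ U

/-- Simplicity of a `𝔚`-module. -/
def IsSimple (ρ : WittRep W) : Prop :=
  (∃ v : W, v ≠ 0) ∧ ∀ U : Submodule ℂ W, ρ.Invariant U → U = ⊥ ∨ U = ⊤

/-- A `𝔟`-submodule (`𝔟 = span{d_i : i ≥ 0}`). -/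
def BInvariant (ρ : WittRep W) (U : Submodule ℂ W) : Prop :=
  ∀ i : ℤ, 0 ≤ i → ∀ u ∈ U, ρ.d i u ∈ U

/-- The socle `Soc_𝔟(W)`: the sum of the minimal nonzero `𝔟`-submodules. -/
def Soc (ρ : WittRep W) : Submodule ℂ W :=
  sSup {U | ρ.BInvariant U ∧ U ≠ ⊥ ∧
    ∀ U' : Submodule ℂ W, ρ.BInvariant U' → U' ≠ ⊥ → U' ≤ U → U' = U}

/-- `w₀` is a highest weight vector of weight `b'`. -/
def IsHW (ρ : WittRep W) (w₀ : W) (b' : ℂ) : Prop :=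
  w₀ ≠ 0 ∧ ρ.d 0 w₀ = b' • w₀ ∧ ∀ i : ℤ, 1 ≤ i → ρ.d i w₀ = 0

/-- `w₀` generates the `𝔚`-module. -/
def Generates (ρ : WittRep W) (w₀ : W) : Prop :=
  ∀ U : Submodule ℂ W, ρ.Invariant U → w₀ ∈ U → U = ⊤

/-- The operator `e^{kt} d/dt = Σ_{i ≥ 0} (k^i/i!) d_{i-1}` (a finite sum on each vector of a
module in `O_𝔚`). -/
noncomputable def E (ρ : WittRep W) (k : ℤ) (w : W) : W :=
  ∑ᶠ i : ℕ, (((k : ℂ) ^ i) / (Nat.factorial i : ℂ)) • ρ.d ((i : ℤ) - 1) w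

/-- The action of `d_k` on `L(W, λ, a, b) = W ⊗ ℂ[t, t⁻¹]`, realized on `ℤ →₀ W`
(`w ⊗ t^j ↦ Finsupp.single j w`):
`d_k · (w ⊗ t^j) = ((λ^k e^{kt} − 1) d/dt + a + kb + j) w ⊗ t^{k+j}`. -/
noncomputable def Lact (ρ : WittRep W) (lam a b : ℂ) (k : ℤ) (f : ℤ →₀ W) : ℤ →₀ W :=
  f.sum fun j w => Finsupp.single (k + j)
    (lam ^ k • ρ.E k w - ρ.d (-1) w + (a + (k : ℂ) * b + (j : ℂ)) • w)

/-- The PBW map `ℕ →₀ ℂ → W`, `(k, c) ↦ c • d_{-1}^k w₀`. -/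
noncomputable def pbwMap (ρ : WittRep W) (w₀ : W) : (ℕ →₀ ℂ) →ₗ[ℂ] W :=
  Finsupp.lsum ℂ fun k : ℕ => ((ρ.d (-1)) ^ k) ∘ₗ LinearMap.toSpanSingleton ℂ W w₀

/-- `W` is the Verma `𝔚`-module with highest weight vector `w₀` of highest weight `b'`. -/
def IsVerma (ρ : WittRep W) (w₀ : W) (b' : ℂ) : Prop :=
  ρ.d 0 w₀ = b' • w₀ ∧ (∀ i : ℤ, 1 ≤ i → ρ.d i w₀ = 0) ∧
    Function.Bijective (ρ.pbwMap w₀)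

/-- `W^{(n)} = Σ_{i=0}^n d_{-1}^i (Soc_𝔟 W)`. -/
noncomputable def Wn (ρ : WittRep W) (n : ℕ) : Submodule ℂ W :=
  ⨆ i : Fin (n + 1), Submodule.map ((ρ.d (-1)) ^ (i : ℕ)) ρ.Soc

/-- `L₀(a, b') = span{d₁^i · (w₀ ⊗ t^{2j})} ⊆ L(W, -1, a, b' + 1)`. -/
noncomputable def Lzero (ρ : WittRep W) (a b' : ℂ) (w₀ : W) : Submodule ℂ (ℤ →₀ W) :=
  Submodule.span ℂ
    {g | ∃ (i : ℕ) (j : ℤ), g = (ρ.Lact (-1) a (b' + 1) 1)^[i] (Finsupp.single (2 * j) w₀)}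

/-- `L₁(a, b') = span{d₁^i · (w₀ ⊗ t^{2j+1})} ⊆ L(W, -1, a, b' + 1)`. -/
noncomputable def Lone (ρ : WittRep W) (a b' : ℂ) (w₀ : W) : Submodule ℂ (ℤ →₀ W) :=
  Submodule.span ℂ
    {g | ∃ (i : ℕ) (j : ℤ), g = (ρ.Lact (-1) a (b' + 1) 1)^[i] (Finsupp.single (2 * j + 1) w₀)}

end WittRep

/-- A representation of the Lie algebra `𝔟 = span{d_i : i ≥ 0}`. -/
structure BRep (B : Type*) [AddCommGroup B] [Module ℂ B] where
  d : ℕ → B →ₗ[ℂ] B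
  comm : ∀ m n : ℕ, d m ∘ₗ d n - d n ∘ₗ d m = (((n : ℂ) - (m : ℂ))) • d (m + n)

namespace BRep

variable {B : Type*} [AddCommGroup B] [Module ℂ B]

/-- Condition A : the module lies in the category `O_𝔟`. -/
def InO (ρ : BRep B) : Prop := ∀ v : B, ∃ n : ℕ, ∀ i : ℕ, n ≤ i → ρ.d i v = 0

def IsTrivial (ρ : BRep B) : Prop := ∀ i : ℕ, ρ.d i = 0

def IsSimple (ρ : BRep B) : Prop :=
  (∃ v : B, v ≠ 0) ∧
    ∀ U : Submodule ℂ B, (∀ i : ℕ, ∀ u ∈ U, ρ.d i u ∈ U) → U = ⊥ ∨ U = ⊤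

/-- The set of `r ∈ ℤ≥0` such that `d_{r+i} v = 0` for all `i ≥ 1`;
`ord_𝔟(v)` is its least element. -/
def ordSet (ρ : BRep B) (v : B) : Set ℕ := {r : ℕ | ∀ i : ℕ, r + 1 ≤ i → ρ.d i v = 0}

/-- The action of `d_m` on the Virasoro module `N(B_(c), a) = B ⊗ ℂ[t, t⁻¹]`, realized on
`ℤ →₀ B`:  `d_m · (w ⊗ t^j) = (Σ_{i≥1} (m^i/i!) d_{i-1} + mc + a + j) w ⊗ t^{m+j}`
(`c` is the twist of the `d₀`-action; `c = 0` gives `N(B, a)`). -/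
noncomputable def Nact (ρ : BRep B) (a c : ℂ) (m : ℤ) (f : ℤ →₀ B) : ℤ →₀ B :=
  f.sum fun j w => Finsupp.single (m + j)
    ((∑ᶠ i : ℕ, (((m : ℂ) ^ (i + 1)) / (Nat.factorial (i + 1) : ℂ)) • ρ.d i w) +
      ((m : ℂ) * c + a + (j : ℂ)) • w)

end BRep

/-- For a family `U : ℤ → Submodule ℂ W`, the subspace `⊕_j U j ⊗ t^j` of `W ⊗ ℂ[t,t⁻¹]`. -/
def gradedSub {W : Type*} [AddCommGroup W] [Module ℂ W] (U : ℤ → Submodule ℂ W) :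
    Submodule ℂ (ℤ →₀ W) where
  carrier := {f | ∀ j, f j ∈ U j}
  add_mem' := fun hf hg j => by
    simpa only [Finsupp.add_apply] using (U j).add_mem (hf j) (hg j)
  zero_mem' := fun j => by simp
  smul_mem' := fun c f hf j => by
    simpa only [Finsupp.smul_apply] using (U j).smul_mem c (hf j)

/-- A submodule invariant under a (ℤ-indexed) family of operators. -/
def ActInvariant {V : Type*} [AddCommGroup V] [Module ℂ V] (act : ℤ → V → V)
    (M : Submodule ℂ V) : Prop :=
  ∀ k : ℤ, ∀ u ∈ M, act k u ∈ M

/-- Simplicity of the module given by a family of operators (the central element acts by zero). -/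
def ActSimple {V : Type*} [AddCommGroup V] [Module ℂ V] (act : ℤ → V → V) : Prop :=
  (∃ v : V, v ≠ 0) ∧ ∀ M : Submodule ℂ V, ActInvariant act M → M = ⊥ ∨ M = ⊤

/-- A representation of the Virasoro algebra. -/
structure VirasoroRep (V : Type*) [AddCommGroup V] [Module ℂ V] where
  d : ℤ → V →ₗ[ℂ] V
  z : V →ₗ[ℂ] V
  comm : ∀ m n : ℤ, d m ∘ₗ d n - d n ∘ₗ d m =
    (((n - m : ℤ) : ℂ)) • d (m + n) +
      (if m + n = 0 then (((n : ℂ) ^ 3 - (n : ℂ)) / 12) else 0) • z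
  comm_z : ∀ m : ℤ, d m ∘ₗ z = z ∘ₗ d m


open Polynomial

section AuxLemmas

private lemma finsum_range {M : Type*} [AddCommMonoid M] {f : ℕ → M} {N : ℕ}
    (h : ∀ i, N ≤ i → f i = 0) : ∑ᶠ i, f i = ∑ i ∈ Finset.range N, f i := by
  refine finsum_eq_sum_of_support_subset f ?_
  intro i hi
  simp only [Function.mem_support] at hi
  simp only [Finset.coe_range, Set.mem_Iio]
  by_contra h'
  exact hi (h i (by omega))

variable {W : Type*} [AddCommGroup W] [Module ℂ W]

namespace WittRep

variable (ρ : WittRep W)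

lemma d_comm_apply (m n : ℤ) (hm : -1 ≤ m) (hn : -1 ≤ n) (v : W) :
    ρ.d m (ρ.d n v) = ρ.d n (ρ.d m v) + ((n - m : ℤ) : ℂ) • ρ.d (m + n) v := by
  have h := congrArg (fun L : W →ₗ[ℂ] W => L v) (ρ.comm m n hm hn)
  simp only [LinearMap.sub_apply, LinearMap.comp_apply, LinearMap.smul_apply] at h
  rw [add_comm]
  exact (sub_eq_iff_eq_add.mp h)

lemma E_eq_sum (k : ℤ) (v : W) {n : ℕ} (hn : ∀ i : ℤ, (n : ℤ) ≤ i → ρ.d i v = 0)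
    {N : ℕ} (hN : n + 1 ≤ N) :
    ρ.E k v = ∑ i ∈ Finset.range N, (((k : ℂ) ^ i) / (Nat.factorial i : ℂ)) • ρ.d ((i : ℤ) - 1) v := by
  refine finsum_range ?_
  intro i hi
  rw [hn ((i : ℤ) - 1) (by push_cast; omega), smul_zero]

lemma E_zero (k : ℤ) : ρ.E k 0 = 0 := by
  simp [WittRep.E]

lemma E_add (hO : ρ.InO) (k : ℤ) (u v : W) : ρ.E k (u + v) = ρ.E k u + ρ.E k v := by
  obtain ⟨n, hn⟩ := hO u
  obtain ⟨m, hm⟩ := hO v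
  have hu : ∀ i : ℤ, ((n + m : ℕ) : ℤ) ≤ i → ρ.d i u = 0 := fun i hi =>
    hn i (by push_cast at hi ⊢; omega)
  have hv : ∀ i : ℤ, ((n + m : ℕ) : ℤ) ≤ i → ρ.d i v = 0 := fun i hi =>
    hm i (by push_cast at hi ⊢; omega)
  have huv : ∀ i : ℤ, ((n + m : ℕ) : ℤ) ≤ i → ρ.d i (u + v) = 0 := fun i hi => by
    rw [map_add, hu i hi, hv i hi, add_zero]
  rw [ρ.E_eq_sum k (u + v) huv (le_refl (n + m + 1)),
    ρ.E_eq_sum k u hu (le_refl (n + m + 1)), ρ.E_eq_sum k v hv (le_refl (n + m + 1)),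
    ← Finset.sum_add_distrib]
  exact Finset.sum_congr rfl fun i _ => by rw [map_add, smul_add]

lemma E_smul (hO : ρ.InO) (k : ℤ) (c : ℂ) (v : W) : ρ.E k (c • v) = c • ρ.E k v := by
  obtain ⟨n, hn⟩ := hO v
  have hcv : ∀ i : ℤ, (n : ℤ) ≤ i → ρ.d i (c • v) = 0 := fun i hi => by
    rw [map_smul, hn i hi, smul_zero]
  rw [ρ.E_eq_sum k (c • v) hcv (le_refl (n + 1)), ρ.E_eq_sum k v hn (le_refl (n + 1)),
    Finset.smul_sum]
  exact Finset.sum_congr rfl fun i _ => by rw [map_smul, smul_comm]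

lemma E_d_neg_one (hO : ρ.InO) (k : ℤ) (v : W) :
    ρ.E k (ρ.d (-1) v) = ρ.d (-1) (ρ.E k v) - (k : ℂ) • ρ.E k v := by
  obtain ⟨n, hn⟩ := hO v
  obtain ⟨n', hn'⟩ := hO (ρ.d (-1) v)
  set M := n + n' + 1 with hM
  have hsum : ρ.E k (ρ.d (-1) v) = ∑ i ∈ Finset.range (M + 1),
      (((k : ℂ) ^ i) / (Nat.factorial i : ℂ)) • ρ.d ((i : ℤ) - 1) (ρ.d (-1) v) :=
    ρ.E_eq_sum k _ hn' (by omega)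
  have hstep : ∀ i : ℕ, ρ.d ((i : ℤ) - 1) (ρ.d (-1) v)
      = ρ.d (-1) (ρ.d ((i : ℤ) - 1) v) - (i : ℂ) • ρ.d ((i : ℤ) - 2) v := by
    intro i
    have h := ρ.d_comm_apply ((i : ℤ) - 1) (-1) (by omega) (by norm_num) v
    have e1 : (((-1 : ℤ) - ((i : ℤ) - 1) : ℤ) : ℂ) = -(i : ℂ) := by push_cast; ring
    have e2 : ((i : ℤ) - 1) + (-1) = (i : ℤ) - 2 := by ring
    rw [h, e1, e2, neg_smul, ← sub_eq_add_neg]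
  have hsplit : ∀ i : ℕ, (((k : ℂ) ^ i) / (Nat.factorial i : ℂ)) • ρ.d ((i : ℤ) - 1) (ρ.d (-1) v)
      = ρ.d (-1) ((((k : ℂ) ^ i) / (Nat.factorial i : ℂ)) • ρ.d ((i : ℤ) - 1) v)
        - ((((k : ℂ) ^ i) / (Nat.factorial i : ℂ)) * (i : ℂ)) • ρ.d ((i : ℤ) - 2) v := by
    intro i
    rw [hstep i, smul_sub, map_smul, smul_smul]
  rw [hsum]
  simp only [hsplit]
  rw [Finset.sum_sub_distrib, ← map_sum]
  have h1 : ∑ i ∈ Finset.range (M + 1),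
      (((k : ℂ) ^ i) / (Nat.factorial i : ℂ)) • ρ.d ((i : ℤ) - 1) v = ρ.E k v :=
    (ρ.E_eq_sum k v hn (by omega)).symm
  have h2 : ∑ i ∈ Finset.range (M + 1),
      ((((k : ℂ) ^ i) / (Nat.factorial i : ℂ)) * (i : ℂ)) • ρ.d ((i : ℤ) - 2) v
      = (k : ℂ) • ρ.E k v := by
    rw [Finset.sum_range_succ']
    have h0 : (((k : ℂ) ^ 0) / (Nat.factorial 0 : ℂ)) * ((0 : ℕ) : ℂ) = 0 := by norm_num
    rw [h0, zero_smul, add_zero]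
    have hterm : ∀ i : ℕ, ((((k : ℂ) ^ (i + 1)) / (Nat.factorial (i + 1) : ℂ)) * ((i + 1 : ℕ) : ℂ))
        • ρ.d (((i + 1 : ℕ) : ℤ) - 2) v
        = (k : ℂ) • ((((k : ℂ) ^ i) / (Nat.factorial i : ℂ)) • ρ.d ((i : ℤ) - 1) v) := by
      intro i
      have hfac : ((Nat.factorial i : ℂ)) ≠ 0 := Nat.cast_ne_zero.mpr i.factorial_ne_zero
      have hi1 : ((i : ℂ) + 1) ≠ 0 := Nat.cast_add_one_ne_zero i
      have hc : (((k : ℂ) ^ (i + 1)) / (Nat.factorial (i + 1) : ℂ)) * ((i + 1 : ℕ) : ℂ)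
          = (k : ℂ) * (((k : ℂ) ^ i) / (Nat.factorial i : ℂ)) := by
        rw [Nat.factorial_succ]
        push_cast
        field_simp
        ring
      have hidx : ((i + 1 : ℕ) : ℤ) - 2 = (i : ℤ) - 1 := by push_cast; ring
      rw [hc, hidx, smul_smul]
    rw [Finset.sum_congr rfl fun i _ => hterm i, ← Finset.smul_sum,
      ρ.E_eq_sum k v hn (show n + 1 ≤ M from by omega)]
  rw [h1, h2]

/-- Evaluation map `ℂ[X] →ₗ W`, `p ↦ p(d₋₁) w`. -/
noncomputable def evv (w : W) : ℂ[X] →ₗ[ℂ] W where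
  toFun p := (aeval (ρ.d (-1)) p) w
  map_add' p q := by simp
  map_smul' c p := by simp

@[simp] lemma evv_apply (w : W) (p : ℂ[X]) : ρ.evv w p = (aeval (ρ.d (-1)) p) w := rfl

lemma evv_Xpow (w : W) (k : ℕ) : ρ.evv w (X ^ k) = ((ρ.d (-1)) ^ k) w := by
  simp [map_pow]

lemma d_neg_one_evv (w : W) (q : ℂ[X]) : ρ.d (-1) (ρ.evv w q) = ρ.evv w (X * q) := by
  simp [map_mul, Module.End.mul_apply]

end WittRep

/-- `(ℕ →₀ ℂ) →ₗ ℂ[X]`. -/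
noncomputable def toPolyL : (ℕ →₀ ℂ) →ₗ[ℂ] ℂ[X] := Finsupp.lsum ℂ fun k => monomial k

/-- `ℂ[X] →ₗ (ℕ →₀ ℂ)`. -/
noncomputable def ofPolyL : ℂ[X] →ₗ[ℂ] (ℕ →₀ ℂ) where
  toFun p := p.toFinsupp.coeff
  map_add' p q := by rw [Polynomial.toFinsupp_add]; rfl
  map_smul' c p := by rw [Polynomial.toFinsupp_smul]; rfl

lemma toPolyL_ofPolyL (p : ℂ[X]) : toPolyL (ofPolyL p) = p := by
  induction p using Polynomial.induction_on' with
  | add p q hp hq => rw [map_add, map_add, hp, hq]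
  | monomial n c =>
    show toPolyL (monomial n c).toFinsupp.coeff = monomial n c
    rw [Polynomial.toFinsupp_monomial]
    simp [toPolyL]

lemma evv_toPolyL {W : Type*} [AddCommGroup W] [Module ℂ W] (ρ : WittRep W) (w : W)
    (f : ℕ →₀ ℂ) : ρ.evv w (toPolyL f) = ρ.pbwMap w f := by
  have : (ρ.evv w) ∘ₗ toPolyL = ρ.pbwMap w := by
    apply Finsupp.lhom_ext
    intro k c
    simp [toPolyL, WittRep.pbwMap, aeval_monomial, Module.algebraMap_end_apply,
      Module.End.mul_apply, map_smul, map_pow]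
  exact LinearMap.congr_fun this f

lemma evv_bijective {W : Type*} [AddCommGroup W] [Module ℂ W] (ρ : WittRep W) (w : W)
    (h : Function.Bijective (ρ.pbwMap w)) : Function.Bijective (ρ.evv w) := by
  constructor
  · intro p q hpq
    have h1 : ρ.pbwMap w (ofPolyL p) = ρ.pbwMap w (ofPolyL q) := by
      rw [← evv_toPolyL, ← evv_toPolyL, toPolyL_ofPolyL, toPolyL_ofPolyL, hpq]
    have h2 := h.1 h1
    rw [← toPolyL_ofPolyL p, ← toPolyL_ofPolyL q, h2]
  · intro v
    obtain ⟨f, hf⟩ := h.2 v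
    exact ⟨toPolyL f, by rw [evv_toPolyL, hf]⟩

namespace WittRep

variable (ρ : WittRep W)

lemma E_hw {w : W} {b' : ℂ} (hw0 : ρ.d 0 w = b' • w)
    (hw1 : ∀ i : ℤ, 1 ≤ i → ρ.d i w = 0) (k : ℤ) :
    ρ.E k w = ρ.d (-1) w + ((k : ℂ) * b') • w := by
  have hn : ∀ i : ℤ, ((1 : ℕ) : ℤ) ≤ i → ρ.d i w = 0 := fun i hi => hw1 i (by exact_mod_cast hi)
  rw [ρ.E_eq_sum k w hn (le_refl 2)]
  rw [Finset.sum_range_succ, Finset.sum_range_one]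
  norm_num [hw0, smul_smul]

lemma E_aeval_pow (hO : ρ.InO) {w : W} {b' : ℂ} (hw0 : ρ.d 0 w = b' • w)
    (hw1 : ∀ i : ℤ, 1 ≤ i → ρ.d i w = 0) (k : ℤ) (n : ℕ) :
    ρ.E k (ρ.evv w (X ^ n)) = ρ.evv w ((X + C ((k : ℂ) * b')) * (X - C (k : ℂ)) ^ n) := by
  induction n with
  | zero =>
    rw [pow_zero, pow_zero, mul_one]
    have : ρ.evv w (1 : ℂ[X]) = w := by simp
    rw [this, E_hw ρ hw0 hw1 k, map_add]
    congr 1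
    · simp
    · simp only [WittRep.evv_apply, aeval_C, Module.algebraMap_end_apply]
  | succ n ih =>
    have hXp : ρ.evv w (X ^ (n + 1)) = ρ.d (-1) (ρ.evv w (X ^ n)) := by
      rw [ρ.d_neg_one_evv, ← pow_succ']
    rw [hXp, ρ.E_d_neg_one hO k, ih, ρ.d_neg_one_evv]
    have hsm : (k : ℂ) • ρ.evv w ((X + C ((k : ℂ) * b')) * (X - C (k : ℂ)) ^ n)
        = ρ.evv w (C (k : ℂ) * ((X + C ((k : ℂ) * b')) * (X - C (k : ℂ)) ^ n)) := by
      rw [← smul_eq_C_mul, map_smul]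
    rw [hsm, ← map_sub]
    congr 1
    ring

lemma E_aeval (hO : ρ.InO) {w : W} {b' : ℂ} (hw0 : ρ.d 0 w = b' • w)
    (hw1 : ∀ i : ℤ, 1 ≤ i → ρ.d i w = 0) (k : ℤ) (p : ℂ[X]) :
    ρ.E k (ρ.evv w p) = ρ.evv w ((X + C ((k : ℂ) * b')) * p.comp (X - C (k : ℂ))) := by
  induction p using Polynomial.induction_on' with
  | add p q hp hq =>
    rw [map_add, ρ.E_add hO, hp, hq, add_comp, mul_add, map_add]
  | monomial n c =>
    rw [← C_mul_X_pow_eq_monomial, ← smul_eq_C_mul, map_smul, ρ.E_smul hO, ρ.E_aeval_pow hO hw0 hw1,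
      smul_comp, X_pow_comp, ← map_smul]
    congr 1
    rw [smul_eq_C_mul, smul_eq_C_mul]
    ring

lemma Lact_single (lam a b : ℂ) (k j : ℤ) (v : W) :
    ρ.Lact lam a b k (Finsupp.single j v) =
      Finsupp.single (k + j) (lam ^ k • ρ.E k v - ρ.d (-1) v + (a + (k : ℂ) * b + (j : ℂ)) • v) := by
  unfold WittRep.Lact
  rw [Finsupp.sum_single_index]
  rw [ρ.E_zero, map_zero, smul_zero, smul_zero, sub_zero, zero_add, Finsupp.single_zero]

lemma Lact_zero (lam a b : ℂ) (k : ℤ) : ρ.Lact lam a b k 0 = 0 := by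
  unfold WittRep.Lact
  exact Finsupp.sum_zero_index

lemma Lact_add (hO : ρ.InO) (lam a b : ℂ) (k : ℤ) (f g : ℤ →₀ W) :
    ρ.Lact lam a b k (f + g) = ρ.Lact lam a b k f + ρ.Lact lam a b k g := by
  unfold WittRep.Lact
  refine Finsupp.sum_add_index' ?_ ?_
  · intro j
    rw [ρ.E_zero, map_zero, smul_zero, smul_zero, sub_zero, zero_add, Finsupp.single_zero]
  · intro j w₁ w₂
    rw [← Finsupp.single_add]
    congr 1
    rw [ρ.E_add hO, map_add, smul_add, smul_add]
    abel

lemma Lact_smul (hO : ρ.InO) (lam a b : ℂ) (k : ℤ) (c : ℂ) (f : ℤ →₀ W) :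
    ρ.Lact lam a b k (c • f) = c • ρ.Lact lam a b k f := by
  unfold WittRep.Lact
  rw [Finsupp.sum_smul_index', Finsupp.smul_sum]
  · refine Finsupp.sum_congr fun j _ => ?_
    rw [Finsupp.smul_single]
    congr 1
    rw [ρ.E_smul hO, map_smul]
    module
  · intro j
    rw [ρ.E_zero, map_zero, smul_zero, smul_zero, sub_zero, zero_add, Finsupp.single_zero]

end WittRep

/-- The substitution `p(X) ↦ p(μ - X)` as a linear map. -/
noncomputable def tauP (μ : ℂ) : ℂ[X] →ₗ[ℂ] ℂ[X] where
  toFun p := p.comp (C μ - X)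
  map_add' p q := add_comp
  map_smul' c p := by simp [smul_comp]

@[simp] lemma tauP_apply (μ : ℂ) (p : ℂ[X]) : tauP μ p = p.comp (C μ - X) := rfl

lemma tauP_tauP (μ : ℂ) (p : ℂ[X]) : tauP μ (tauP μ p) = p := by
  simp only [tauP_apply]
  rw [comp_assoc, sub_comp, C_comp, X_comp, sub_sub_cancel, comp_X]

end AuxLemmas

theorem stmt18 {W W₀ : Type*} [AddCommGroup W] [Module ℂ W] [AddCommGroup W₀] [Module ℂ W₀]
    (ρ : WittRep W) (ρ₀ : WittRep W₀) (hO : ρ.InO) (hO₀ : ρ₀.InO)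
    (lam a b' b'₀ : ℂ) (hlam : lam ≠ 0)
    (w : W) (w₀ : W₀) (hV : ρ.IsVerma w b') (hV₀ : ρ₀.IsVerma w₀ b'₀) :
    ∃ φ : (ℤ →₀ W) ≃ₗ[ℂ] (ℤ →₀ W₀),
      (∀ (k : ℕ) (l : ℤ),
        φ (Finsupp.single l (((ρ.d (-1)) ^ k) w)) =
          lam ^ (-l) • Finsupp.single l
            ((((a + (l : ℂ)) • (LinearMap.id : W₀ →ₗ[ℂ] W₀) - ρ₀.d (-1)) ^ k) w₀)) ∧
      (∀ (m : ℤ) (f : ℤ →₀ W),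
        φ (ρ.Lact lam a (b'₀ + 1) m f) = ρ₀.Lact lam⁻¹ a (b' + 1) m (φ f)) := by
  
  classical
  obtain ⟨hw0, hw1, hbij⟩ := hV
  obtain ⟨hw0₀, hw1₀, hbij₀⟩ := hV₀
  let eW : ℂ[X] ≃ₗ[ℂ] W := LinearEquiv.ofBijective (ρ.evv w) (evv_bijective ρ w hbij)
  let eW₀ : ℂ[X] ≃ₗ[ℂ] W₀ := LinearEquiv.ofBijective (ρ₀.evv w₀) (evv_bijective ρ₀ w₀ hbij₀)
  let g : ℤ → (W →ₗ[ℂ] W₀) := fun l =>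
    (eW₀ : ℂ[X] →ₗ[ℂ] W₀) ∘ₗ tauP (a + (l : ℂ)) ∘ₗ (eW.symm : W →ₗ[ℂ] ℂ[X])
  let g' : ℤ → (W₀ →ₗ[ℂ] W) := fun l =>
    (eW : ℂ[X] →ₗ[ℂ] W) ∘ₗ tauP (a + (l : ℂ)) ∘ₗ (eW₀.symm : W₀ →ₗ[ℂ] ℂ[X])
  let F : (ℤ →₀ W) →ₗ[ℂ] (ℤ →₀ W₀) :=
    Finsupp.lsum ℂ fun l => Finsupp.lsingle l ∘ₗ (lam ^ (-l) • g l)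
  let G : (ℤ →₀ W₀) →ₗ[ℂ] (ℤ →₀ W) :=
    Finsupp.lsum ℂ fun l => Finsupp.lsingle l ∘ₗ (lam ^ l • g' l)
  have hg'g : ∀ (l : ℤ) (v : W), g' l (g l v) = v := by
    intro l v
    simp only [g, g', LinearMap.comp_apply, LinearEquiv.coe_coe]
    rw [LinearEquiv.symm_apply_apply, tauP_tauP, LinearEquiv.apply_symm_apply]
  have hgg' : ∀ (l : ℤ) (v : W₀), g l (g' l v) = v := by
    intro l v
    simp only [g, g', LinearMap.comp_apply, LinearEquiv.coe_coe]
    rw [LinearEquiv.symm_apply_apply, tauP_tauP, LinearEquiv.apply_symm_apply]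
  have hFs : ∀ (l : ℤ) (v : W), F (Finsupp.single l v) =
      Finsupp.single l (lam ^ (-l) • g l v) := by
    intro l v
    simp [F, Finsupp.lsum_single]
  have hGs : ∀ (l : ℤ) (v : W₀), G (Finsupp.single l v) =
      Finsupp.single l (lam ^ l • g' l v) := by
    intro l v
    simp [G, Finsupp.lsum_single]
  have hzz : ∀ l : ℤ, lam ^ (-l) * lam ^ l = 1 := fun l => by
    rw [← zpow_add₀ hlam]; simp
  have hzz' : ∀ l : ℤ, lam ^ l * lam ^ (-l) = 1 := fun l => by
    rw [← zpow_add₀ hlam]; simp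
  have hFG : F ∘ₗ G = LinearMap.id := by
    apply Finsupp.lhom_ext
    intro l v
    rw [LinearMap.comp_apply, LinearMap.id_apply, hGs, hFs, map_smul, hgg', smul_smul, hzz,
      one_smul]
  have hGF : G ∘ₗ F = LinearMap.id := by
    apply Finsupp.lhom_ext
    intro l v
    rw [LinearMap.comp_apply, LinearMap.id_apply, hFs, hGs, map_smul, hg'g, smul_smul, hzz',
      one_smul]
  let φ : (ℤ →₀ W) ≃ₗ[ℂ] (ℤ →₀ W₀) := LinearEquiv.ofLinear F G hFG hGF
  have hφcoe : ∀ x, φ x = F x := fun _ => rfl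
  have hφ : ∀ (l : ℤ) (p : ℂ[X]), F (Finsupp.single l (ρ.evv w p))
      = lam ^ (-l) • Finsupp.single l (ρ₀.evv w₀ (tauP (a + (l : ℂ)) p)) := by
    intro l p
    have h2 : g l (ρ.evv w p) = ρ₀.evv w₀ (tauP (a + (l : ℂ)) p) := by
      simp only [g, LinearMap.comp_apply, LinearEquiv.coe_coe]
      have h1 : eW.symm (ρ.evv w p) = p := by
        rw [LinearEquiv.symm_apply_eq]; rfl
      rw [h1]; rfl
    rw [hFs, h2, Finsupp.smul_single]
  refine ⟨φ, ?_, ?_⟩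
  · intro k l
    have e1 : ((ρ.d (-1)) ^ k) w = ρ.evv w (X ^ k) := (ρ.evv_Xpow w k).symm
    rw [hφcoe, e1, hφ]
    congr 2
    rw [tauP_apply, X_pow_comp]
    simp only [WittRep.evv_apply, map_pow, map_sub, aeval_X, aeval_C,
      Module.algebraMap_end_eq_smul_id]
  · intro m f
    induction f using Finsupp.induction_linear with
    | zero => rw [ρ.Lact_zero, map_zero, ρ₀.Lact_zero]
    | add f₁ f₂ hf₁ hf₂ =>
      rw [ρ.Lact_add hO, map_add, hf₁, hf₂, map_add, ρ₀.Lact_add hO₀]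
    | single j v =>
      obtain ⟨p, hp⟩ := (evv_bijective ρ w hbij).2 v
      rw [← hp]
      set μ : ℂ := a + ((m + j : ℤ) : ℂ) with hμdef
      set ν : ℂ := a + (j : ℂ) with hνdef
      set Q : ℂ[X] := lam ^ m • ((X + C ((m : ℂ) * b')) * p.comp (X - C (m : ℂ)))
          - X * p + C (a + (m : ℂ) * (b'₀ + 1) + (j : ℂ)) * p with hQdef
      set B : ℂ[X] := tauP ν p with hBdef
      set R : ℂ[X] := lam⁻¹ ^ m • ((X + C ((m : ℂ) * b'₀)) * B.comp (X - C (m : ℂ)))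
          - X * B + C (a + (m : ℂ) * (b' + 1) + (j : ℂ)) * B with hRdef
      have hL : ρ.Lact lam a (b'₀ + 1) m (Finsupp.single j (ρ.evv w p))
          = Finsupp.single (m + j) (ρ.evv w Q) := by
        rw [ρ.Lact_single, hQdef]
        congr 1
        rw [ρ.E_aeval hO hw0 hw1, ρ.d_neg_one_evv, ← smul_eq_C_mul, map_add, map_sub,
          map_smul, map_smul]
      have hR : ρ₀.Lact lam⁻¹ a (b' + 1) m (Finsupp.single j (ρ₀.evv w₀ B))
          = Finsupp.single (m + j) (ρ₀.evv w₀ R) := by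
        rw [ρ₀.Lact_single, hRdef]
        congr 1
        rw [ρ₀.E_aeval hO₀ hw0₀ hw1₀, ρ₀.d_neg_one_evv, ← smul_eq_C_mul, map_add, map_sub,
          map_smul, map_smul]
      have hμν : μ = ν + (m : ℂ) := by rw [hμdef, hνdef]; push_cast; ring
      have hpoly : tauP μ Q = lam ^ m • R := by
        have hc1 : a + (m : ℂ) * (b'₀ + 1) + (j : ℂ) = μ + (m : ℂ) * b'₀ := by
          rw [hμdef]; push_cast; ring
        have hc2 : a + (m : ℂ) * (b' + 1) + (j : ℂ) = μ + (m : ℂ) * b' := by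
          rw [hμdef]; push_cast; ring
        rw [hQdef, hRdef, hBdef, tauP_apply, tauP_apply]
        simp only [sub_comp, add_comp, mul_comp, smul_comp, C_comp, X_comp, comp_assoc]
        rw [show C μ - X - C (m : ℂ) = C ν - X from by
            rw [hμν, hνdef]; simp only [C_add]; ring,
          show C ν - (X - C (m : ℂ)) = C μ - X from by
            rw [hμν, hνdef]; simp only [C_add]; ring,
          hc1, hc2, inv_zpow]
        rw [smul_add, smul_sub, smul_smul, mul_inv_cancel₀ (zpow_ne_zero m hlam), one_smul]
        simp only [smul_eq_C_mul, C_add]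
        ring
      have goal1 : F (Finsupp.single (m + j) (ρ.evv w Q))
          = lam ^ (-j) • Finsupp.single (m + j) (ρ₀.evv w₀ R) := by
        rw [hφ, hpoly, map_smul, Finsupp.smul_single, smul_smul]
        rw [show lam ^ (-(m + j)) * lam ^ m = lam ^ (-j) from by
          rw [← zpow_add₀ hlam]; congr 1; ring]
        rw [Finsupp.smul_single]
      rw [hφcoe, hφcoe, hL, goal1, hφ, ← hνdef, ← hBdef, WittRep.Lact_smul ρ₀ hO₀, hR]
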